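/- R(m,n) is a real number, and R(m,n) = mn + (1/2)·Σ_{i=1}^{m+n−1} (k_{i−1} − k_i)(ζ^i + ζ^{−i}). -/

import Mathlib

private lemma chainAnti (f : ℕ → ℕ) (N : ℕ)
    (h : ∀ i j : ℕ, i < j → j < N → f j < f i) :
    ∀ t i : ℕ, i + t < N → f (i + t) + t ≤ f i := by
  intro t
  induction t with
  | zero => intro i _; simp
  | succ t ih =>
    intro i hi
    have h1 := ih (i + 1) (by omega)
    have h2 := h i (i + 1) (by omega) (by omega)
    have he : i + 1 + t = i + (t + 1) := by omega
    rw [he] at h1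
    omega

/-- Let `k` be the increasing enumeration of `𝔉(m,n)`,
let `d ≥ 2` divide `m+n`, let `ζ` be a primitive `d`-th root of unity in
`ℂ`, and set `R(m,n) = (ζ - 1) * Σ_{i<m+n} k_i ζ^i`.  Then `R(m,n)` is a
real number and
`R(m,n) = mn + (1/2) Σ_{i=1}^{m+n-1} (k_{i-1} - k_i)(ζ^i + ζ^{-i})`. -/
theorem R_real_and_symmetric_form (m n : ℕ) (hm : 2 ≤ m) (hmn : m < n)
    (hcop : Nat.Coprime m n) (k : ℕ → ℕ)
    (hmono : ∀ i j : ℕ, i < j → j < m + n → k i < k j)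
    (hmem : ∀ x : ℕ, ((m ∣ x ∨ n ∣ x) ∧ x ≤ m * n) ↔ ∃ i < m + n, k i = x)
    (d : ℕ) (hd : 2 ≤ d) (hdvd : d ∣ m + n)
    (ζ : ℂ) (hζ : IsPrimitiveRoot ζ d)
    (R : ℂ) (hR : R = (ζ - 1) * ∑ i ∈ Finset.range (m + n), (k i : ℂ) * ζ ^ i) :
    (∃ r : ℝ, R = (r : ℂ)) ∧
    R = (m : ℂ) * n + (1 / 2) * ∑ i ∈ Finset.Icc 1 (m + n - 1),
      (((k (i - 1) : ℤ) - (k i : ℤ) : ℤ) : ℂ) * (ζ ^ i + ζ⁻¹ ^ i) := by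
  set N := m + n with hNdef
  have hN5 : 5 ≤ N := by omega
  -- basic facts about k
  have hprop : ∀ i, i < N → (m ∣ k i ∨ n ∣ k i) ∧ k i ≤ m * n := by
    intro i hi
    exact (hmem (k i)).mpr ⟨i, hi, rfl⟩
  have hinj : ∀ i j, i < N → j < N → k i = k j → i = j := by
    intro i j hi hj hk
    rcases lt_trichotomy i j with h | h | h
    · exact absurd hk (by have := hmono i j h hj; omega)
    · exact h
    · exact absurd hk (by have := hmono j i h hi; omega)
  have hk0 : k 0 = 0 := by
    obtain ⟨j, hj, hkj⟩ := (hmem 0).mp ⟨Or.inl (dvd_zero m), Nat.zero_le _⟩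
    rcases Nat.eq_zero_or_pos j with h | h
    · exact h ▸ hkj
    · have := hmono 0 j h hj
      omega
  have hlast : k (N - 1) = m * n := by
    obtain ⟨j, hj, hkj⟩ := (hmem (m * n)).mp ⟨Or.inl (dvd_mul_right m n), le_refl _⟩
    rcases eq_or_lt_of_le (by omega : j ≤ N - 1) with h | h
    · rw [← h, hkj]
    · have h1 := hmono j (N - 1) h (by omega)
      have h2 := (hprop (N - 1) (by omega)).2
      omega
  -- the symmetry k (N-1-i) = mn - k i
  have hex : ∀ i, ∃ j, i < N → (j < N ∧ k j = m * n - k i) := by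
    intro i
    by_cases hi : i < N
    · obtain ⟨hdvd', hle'⟩ := hprop i hi
      have hmem' : (m ∣ m * n - k i ∨ n ∣ m * n - k i) ∧ m * n - k i ≤ m * n := by
        constructor
        · rcases hdvd' with h | h
          · exact Or.inl (Nat.dvd_sub (dvd_mul_right m n) h)
          · exact Or.inr (Nat.dvd_sub (dvd_mul_left n m) h)
        · omega
      obtain ⟨j, hj, hkj⟩ := (hmem _).mp hmem'
      exact ⟨j, fun _ => ⟨hj, hkj⟩⟩
    · exact ⟨0, fun h => absurd h hi⟩
  choose σ hσ using hex
  have hσlt : ∀ i, i < N → σ i < N := fun i hi => (hσ i hi).1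
  have hσval : ∀ i, i < N → k (σ i) = m * n - k i := fun i hi => (hσ i hi).2
  have hσanti : ∀ i j : ℕ, i < j → j < N → σ j < σ i := by
    intro i j hij hj
    have hkij := hmono i j hij hj
    have hkle := (hprop j hj).2
    have h1 : k (σ j) < k (σ i) := by
      rw [hσval i (by omega), hσval j hj]; omega
    rcases lt_trichotomy (σ i) (σ j) with h | h | h
    · exact absurd (hmono _ _ h (hσlt j hj)) (by omega)
    · rw [h] at h1; omega
    · exact h
  have hσ0 : σ 0 = N - 1 := by
    apply hinj _ _ (hσlt 0 (by omega)) (by omega)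
    rw [hσval 0 (by omega), hk0, hlast, Nat.sub_zero]
  have hσlast : σ (N - 1) = 0 := by
    apply hinj _ _ (hσlt (N - 1) (by omega)) (by omega)
    rw [hσval (N - 1) (by omega), hlast, hk0, Nat.sub_self]
  have hσeq : ∀ i, i < N → σ i = N - 1 - i := by
    intro i hi
    have h1 := chainAnti σ N hσanti i 0 (by omega)
    have h2 := chainAnti σ N hσanti (N - 1 - i) i (by omega)
    rw [Nat.zero_add] at h1
    rw [(by omega : i + (N - 1 - i) = N - 1)] at h2
    rw [hσ0] at h1
    rw [hσlast] at h2
    omega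
  have hsym : ∀ i, i < N → k (N - 1 - i) = m * n - k i := by
    intro i hi
    rw [← hσeq i hi]
    exact hσval i hi
  -- facts about ζ
  have hζN : ζ ^ N = 1 := by
    obtain ⟨c, hc⟩ := hdvd
    rw [hc, pow_mul, hζ.pow_eq_one, one_pow]
  have hζ0 : ζ ≠ 0 := hζ.ne_zero (by omega)
  have hζinv : ∀ i, i ≤ N → ζ ^ (N - i) = ζ⁻¹ ^ i := by
    intro i hi
    have h1 : ζ ^ (N - i) * ζ ^ i = 1 := by
      rw [← pow_add, (by omega : N - i + i = N), hζN]
    rw [inv_pow]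
    exact eq_inv_of_mul_eq_one_left h1
  -- Abel summation
  have habel : R = (m : ℂ) * n + ∑ i ∈ Finset.Icc 1 (N - 1),
      (((k (i - 1) : ℤ) - (k i : ℤ) : ℤ) : ℂ) * ζ ^ i := by
    rw [hR]
    have e1 : (ζ - 1) * ∑ i ∈ Finset.range N, (k i : ℂ) * ζ ^ i
        = (∑ i ∈ Finset.range N, (k i : ℂ) * ζ ^ (i + 1))
          - ∑ i ∈ Finset.range N, (k i : ℂ) * ζ ^ i := by
      rw [sub_mul, one_mul, Finset.mul_sum]
      congr 1
      apply Finset.sum_congr rfl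
      intro i _
      ring
    have e2 : ∑ i ∈ Finset.range N, (k i : ℂ) * ζ ^ (i + 1)
        = ∑ i ∈ Finset.Ico 1 (N + 1), (k (i - 1) : ℂ) * ζ ^ i := by
      rw [Finset.sum_Ico_eq_sum_range]
      simp only [Nat.add_sub_cancel]
      apply Finset.sum_congr rfl
      intro i _
      rw [(by omega : 1 + i - 1 = i), (by omega : 1 + i = i + 1)]
    have e3 : ∑ i ∈ Finset.Ico 1 (N + 1), (k (i - 1) : ℂ) * ζ ^ i
        = (∑ i ∈ Finset.Icc 1 (N - 1), (k (i - 1) : ℂ) * ζ ^ i) + (m : ℂ) * n := by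
      have hIcc : Finset.Ico 1 (N + 1) = Finset.Icc 1 N := rfl
      rw [hIcc]
      conv_lhs => rw [(by omega : N = N - 1 + 1)]
      rw [Finset.sum_Icc_succ_top (by omega : 1 ≤ N - 1 + 1),
        (by omega : N - 1 + 1 - 1 = N - 1), (by omega : N - 1 + 1 = N), hlast, hζN]
      push_cast
      ring
    have e4 : ∑ i ∈ Finset.range N, (k i : ℂ) * ζ ^ i
        = ∑ i ∈ Finset.Icc 1 (N - 1), (k i : ℂ) * ζ ^ i := by
      rw [Finset.range_eq_Ico, Finset.sum_eq_sum_Ico_succ_bot (by omega : 0 < N), hk0]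
      have hIco : Finset.Ico (0 + 1) N = Finset.Icc 1 (N - 1) := by
        rw [← Finset.Ico_add_one_right_eq_Icc]
        congr 1
        omega
      rw [hIco]
      simp
    have hAB : (∑ i ∈ Finset.Icc 1 (N - 1), (k (i - 1) : ℂ) * ζ ^ i)
          - ∑ i ∈ Finset.Icc 1 (N - 1), (k i : ℂ) * ζ ^ i
        = ∑ i ∈ Finset.Icc 1 (N - 1), (((k (i - 1) : ℤ) - (k i : ℤ) : ℤ) : ℂ) * ζ ^ i := by
      rw [← Finset.sum_sub_distrib]
      apply Finset.sum_congr rfl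
      intro i _
      push_cast
      ring
    rw [e1, e2, e3, e4, ← hAB]
    ring
  -- key symmetry of the coefficient
  have hcoef : ∀ i ∈ Finset.Icc 1 (N - 1),
      (((k (N - i - 1) : ℤ) - (k (N - i) : ℤ) : ℤ) : ℂ) = (((k (i - 1) : ℤ) - (k i : ℤ) : ℤ) : ℂ) := by
    intro i hi
    rw [Finset.mem_Icc] at hi
    have h1 : k (N - 1 - i) = m * n - k i := hsym i (by omega)
    have h2 : k (N - 1 - (i - 1)) = m * n - k (i - 1) := hsym (i - 1) (by omega)
    rw [(by omega : N - 1 - (i - 1) = N - i)] at h2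
    rw [(by omega : N - i - 1 = N - 1 - i)]
    have hle1 := (hprop i (by omega)).2
    have hle2 := (hprop (i - 1) (by omega)).2
    have hz : ((k (N - 1 - i) : ℤ) - (k (N - i) : ℤ)) = ((k (i - 1) : ℤ) - (k i : ℤ)) := by
      rw [h1, h2]
      omega
    exact congrArg (fun z : ℤ => (z : ℂ)) hz
  -- the reflected sum
  have hrefl : ∑ i ∈ Finset.Icc 1 (N - 1), (((k (i - 1) : ℤ) - (k i : ℤ) : ℤ) : ℂ) * ζ ^ i
      = ∑ i ∈ Finset.Icc 1 (N - 1), (((k (i - 1) : ℤ) - (k i : ℤ) : ℤ) : ℂ) * ζ⁻¹ ^ i := by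
    apply Finset.sum_nbij' (fun i => N - i) (fun i => N - i)
    · intro a ha; rw [Finset.mem_Icc] at *; omega
    · intro a ha; rw [Finset.mem_Icc] at *; omega
    · intro a ha; rw [Finset.mem_Icc] at ha; omega
    · intro a ha; rw [Finset.mem_Icc] at ha; omega
    · intro a ha
      have ha' := ha
      rw [Finset.mem_Icc] at ha'
      have hc : (((k (N - a - 1) : ℤ) - (k (N - a) : ℤ) : ℤ) : ℂ)
          = (((k (a - 1) : ℤ) - (k a : ℤ) : ℤ) : ℂ) := hcoef a ha
      have hz : ζ⁻¹ ^ (N - a) = ζ ^ a := by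
        have := hζinv (N - a) (by omega)
        rw [(by omega : N - (N - a) = a)] at this
        exact this.symm
      rw [hz, hc]
  set S : ℂ := ∑ i ∈ Finset.Icc 1 (N - 1), (((k (i - 1) : ℤ) - (k i : ℤ) : ℤ) : ℂ) * ζ ^ i with hS
  have hsum2 : ∑ i ∈ Finset.Icc 1 (N - 1),
      (((k (i - 1) : ℤ) - (k i : ℤ) : ℤ) : ℂ) * (ζ ^ i + ζ⁻¹ ^ i) = S + S := by
    have hsplit : ∑ i ∈ Finset.Icc 1 (N - 1),
        (((k (i - 1) : ℤ) - (k i : ℤ) : ℤ) : ℂ) * (ζ ^ i + ζ⁻¹ ^ i)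
        = (∑ i ∈ Finset.Icc 1 (N - 1), (((k (i - 1) : ℤ) - (k i : ℤ) : ℤ) : ℂ) * ζ ^ i)
          + ∑ i ∈ Finset.Icc 1 (N - 1), (((k (i - 1) : ℤ) - (k i : ℤ) : ℤ) : ℂ) * ζ⁻¹ ^ i := by
      rw [← Finset.sum_add_distrib]
      apply Finset.sum_congr rfl
      intro i _
      ring
    rw [hsplit, ← hrefl, ← hS]
  have hnorm : ‖ζ‖ = 1 := by
    have := Complex.norm_eq_one_of_pow_eq_one hζN (by omega)
    simpa using this
  have hconjζ : (starRingEnd ℂ) ζ = ζ⁻¹ := (Complex.inv_eq_conj hnorm).symm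
  have hconjS : (starRingEnd ℂ) S = S := by
    have h1 : (starRingEnd ℂ) S
        = ∑ i ∈ Finset.Icc 1 (N - 1), (((k (i - 1) : ℤ) - (k i : ℤ) : ℤ) : ℂ) * ζ⁻¹ ^ i := by
      rw [hS, map_sum]
      apply Finset.sum_congr rfl
      intro i _
      rw [map_mul, map_pow, hconjζ]
      congr 1
      exact map_intCast (starRingEnd ℂ) _
    rw [h1, ← hrefl]
  constructor
  · have hcR : (starRingEnd ℂ) R = R := by
      rw [habel, map_add, map_mul, hconjS, Complex.conj_natCast, Complex.conj_natCast]
    exact ⟨R.re, (Complex.conj_eq_iff_re.mp hcR).symm⟩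
  · rw [habel, hsum2]
    ring
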